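/- Let (X, y) be a random pair with X a random vector in ℝ^p and y real-valued, and suppose the conditional null hypothesis holds at coordinate j: X^j and y are conditionally independent given X^{−j}. Let X̃^j be a random variable such that, conditionally on X^{−j}, X̃^j has the same conditional law as X^j and is conditionally independent of the pair (X^j, y) given X^{−j}. Then the triple ((X̃^j, X^{−j}), y) has the same joint distribution as ((X^j, X^{−j}), y); i.e., conditionally resampling the j-th coordinate leaves the joint law of (X, y) unchanged under the conditional null. -/

import Mathlib

open MeasureTheory ProbabilityTheory Set

noncomputable section

section Aux

variable {Ω β γ δ : Type*} [mΩ : MeasurableSpace Ω] [StandardBorelSpace Ω]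
  [mβ : MeasurableSpace β] [mγ : MeasurableSpace γ] [mδ : MeasurableSpace δ]
  [StandardBorelSpace γ] [Nonempty γ] [StandardBorelSpace δ] [Nonempty δ]

/-- Under conditional independence of `A` and `B` given `Z`, the joint law of `(Z, (A, B))` is
the law of `Z` composed with the product of the conditional distributions. -/
lemma aux_compProd (μ : Measure Ω) [IsProbabilityMeasure μ]
    (Z : Ω → β) (A : Ω → γ) (B : Ω → δ)
    (hZ : Measurable Z) (hA : Measurable A) (hB : Measurable B)
    (hle : mβ.comap Z ≤ mΩ)
    (h : CondIndepFun (mβ.comap Z) hle A B μ) :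
    μ.map (fun ω => (Z ω, (A ω, B ω)))
      = (μ.map Z) ⊗ₘ ((condDistrib A Z μ) ×ₖ (condDistrib B Z μ)) := by
  have hmapZ : IsProbabilityMeasure (μ.map Z) := Measure.isProbabilityMeasure_map hZ.aemeasurable
  refine ext_of_generate_finite
    (image2 (· ×ˢ ·) { s : Set β | MeasurableSet s }
      (image2 (· ×ˢ ·) { t : Set γ | MeasurableSet t } { u : Set δ | MeasurableSet u }))
    ?_ ?_ ?_ ?_
  · exact (generateFrom_eq_prod MeasurableSpace.generateFrom_measurableSet generateFrom_prod
      isCountablySpanning_measurableSet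
      (isCountablySpanning_measurableSet.prod isCountablySpanning_measurableSet)).symm
  · exact IsPiSystem.prod MeasurableSpace.isPiSystem_measurableSet isPiSystem_prod
  · rintro _ ⟨s, hs, _, ⟨t, ht, u, hu, rfl⟩, rfl⟩
    simp only [mem_setOf_eq] at hs ht hu
    rw [Measure.map_apply (hZ.prodMk (hA.prodMk hB)) (hs.prod (ht.prod hu)),
      Measure.compProd_apply_prod hs (ht.prod hu)]
    have hpre : (fun ω => (Z ω, (A ω, B ω))) ⁻¹' (s ×ˢ t ×ˢ u)
        = Z ⁻¹' s ∩ (A ⁻¹' t ∩ B ⁻¹' u) := by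
      ext ω; simp [Set.mem_prod, and_assoc]
    rw [hpre]
    have hker : ∀ x, ((condDistrib A Z μ) ×ₖ (condDistrib B Z μ)) x (t ×ˢ u)
        = condDistrib A Z μ x t * condDistrib B Z μ x u := by
      intro x
      rw [Kernel.prod_apply, Measure.prod_prod]
    simp_rw [hker]
    rw [setLIntegral_map (f := fun a => condDistrib A Z μ a t * condDistrib B Z μ a u) (ht.prod hu |> fun _ => hs)
      ((Kernel.measurable_coe _ ht).mul (Kernel.measurable_coe _ hu)) hZ]
    have hFA := condDistrib_ae_eq_condExp (μ := μ) hZ hA ht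
    have hFB := condDistrib_ae_eq_condExp (μ := μ) hZ hB hu
    have hmul := (condIndepFun_iff_condExp_inter_preimage_eq_mul hA hB).mp h t u ht hu
    have hnnA : 0 ≤ᵐ[μ] μ⟦A ⁻¹' t | mβ.comap Z⟧ :=
      condExp_nonneg (Filter.Eventually.of_forall fun ω => Set.indicator_nonneg (by simp) ω)
    have hintegrand : (fun ω => condDistrib A Z μ (Z ω) t * condDistrib B Z μ (Z ω) u)
        =ᵐ[μ] fun ω => ENNReal.ofReal ((μ⟦A ⁻¹' t ∩ B ⁻¹' u | mβ.comap Z⟧) ω) := by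
      filter_upwards [hFA, hFB, hmul, hnnA] with ω h1 h2 h3 h4
      rw [h3, ENNReal.ofReal_mul h4, ← h1, ← h2,
        ofReal_measureReal (measure_ne_top _ _), ofReal_measureReal (measure_ne_top _ _)]
    rw [setLIntegral_congr_fun_ae (hle _ (⟨s, hs, rfl⟩ : MeasurableSet[mβ.comap Z] (Z ⁻¹' s)))
        (hintegrand.mono fun ω hω _ => hω)]
    have hint : Integrable ((A ⁻¹' t ∩ B ⁻¹' u).indicator (fun _ => (1 : ℝ))) μ :=
      (integrable_const _).indicator ((hA ht).inter (hB hu))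
    have hnnF : 0 ≤ᵐ[μ.restrict (Z ⁻¹' s)] μ⟦A ⁻¹' t ∩ B ⁻¹' u | mβ.comap Z⟧ :=
      ae_restrict_of_ae (condExp_nonneg
        (Filter.Eventually.of_forall fun ω => Set.indicator_nonneg (by simp) ω))
    rw [← ofReal_integral_eq_lintegral_ofReal integrable_condExp.integrableOn hnnF,
      setIntegral_condExp hle hint (⟨s, hs, rfl⟩ : MeasurableSet[mβ.comap Z] (Z ⁻¹' s))]
    rw [integral_indicator ((hA ht).inter (hB hu)), setIntegral_const, smul_eq_mul, mul_one,
      measureReal_restrict_apply ((hA ht).inter (hB hu)),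
      ofReal_measureReal (measure_ne_top _ _), Set.inter_comm]
  · simp [Measure.map_apply (hZ.prodMk (hA.prodMk hB)) MeasurableSet.univ]


end Aux


/-- conditional resampling leaves the joint law invariant under the
conditional null: if `X^j ⟂⟂ y | X^{-j}` and `X̃^j` has, conditionally on `X^{-j}`, the same
conditional law as `X^j` and is conditionally independent of `(X^j, y)` given `X^{-j}`, then
`((X̃^j, X^{-j}), y)` has the same joint distribution as `((X^j, X^{-j}), y)`. -/
theorem conditional_resampling_invariance
    {Ω : Type*} [mΩ : MeasurableSpace Ω] [StandardBorelSpace Ω]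
    (P : Measure Ω) [IsProbabilityMeasure P]
    {p : ℕ} (j : Fin p) (X : Ω → Fin p → ℝ) (y : Ω → ℝ) (Xtj : Ω → ℝ)
    (hX : Measurable X) (hy : Measurable y) (hXtj : Measurable Xtj)
    (hle : MeasurableSpace.comap (fun ω (i : {i : Fin p // i ≠ j}) => X ω i.1)
        inferInstance ≤ mΩ)
    (hnull : CondIndepFun
      (MeasurableSpace.comap (fun ω (i : {i : Fin p // i ≠ j}) => X ω i.1) inferInstance)
      hle (fun ω => X ω j) y P)
    (hcondlaw : ∀ᵐ x ∂(P.map (fun ω (i : {i : Fin p // i ≠ j}) => X ω i.1)),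
      condDistrib Xtj (fun ω (i : {i : Fin p // i ≠ j}) => X ω i.1) P x
        = condDistrib (fun ω => X ω j) (fun ω (i : {i : Fin p // i ≠ j}) => X ω i.1) P x)
    (hcondindep : CondIndepFun
      (MeasurableSpace.comap (fun ω (i : {i : Fin p // i ≠ j}) => X ω i.1) inferInstance)
      hle Xtj (fun ω => (X ω j, y ω)) P) :
    P.map (fun ω => ((Xtj ω, fun i : {i : Fin p // i ≠ j} => X ω i.1), y ω))
      = P.map (fun ω => ((X ω j, fun i : {i : Fin p // i ≠ j} => X ω i.1), y ω)) := by
  set Z : Ω → ({i : Fin p // i ≠ j} → ℝ) := fun ω i => X ω i.1 with hZdef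
  have hZ : Measurable Z :=
    measurable_pi_lambda _ fun i => (measurable_pi_apply i.1).comp hX
  have hXj : Measurable fun ω => X ω j := (measurable_pi_apply j).comp hX
  -- `Xtj ⟂⟂ y | Z`
  have hty : CondIndepFun
      (MeasurableSpace.comap Z inferInstance) hle Xtj y P :=
    hcondindep.comp measurable_id measurable_snd
  -- joint laws via compProd
  have h1 := aux_compProd P Z Xtj y hZ hXtj hy hle hty
  have h2 := aux_compProd P Z (fun ω => X ω j) y hZ hXj hy hle hnull
  have hk : (fun x => ((condDistrib Xtj Z P) ×ₖ (condDistrib y Z P)) x)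
      =ᵐ[P.map Z] (fun x => ((condDistrib (fun ω => X ω j) Z P) ×ₖ (condDistrib y Z P)) x) := by
    filter_upwards [hcondlaw] with x hx
    rw [Kernel.prod_apply, Kernel.prod_apply, hx]
  have hZeq : P.map (fun ω => (Z ω, (Xtj ω, y ω)))
      = P.map (fun ω => (Z ω, (X ω j, y ω))) := by
    rw [h1, h2]
    exact Measure.compProd_congr hk
  -- transport through the rearranging map
  set φ : ({i : Fin p // i ≠ j} → ℝ) × (ℝ × ℝ) → (ℝ × ({i : Fin p // i ≠ j} → ℝ)) × ℝ :=
    fun q => ((q.2.1, q.1), q.2.2) with hφdef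
  have hφ : Measurable φ :=
    ((measurable_snd.fst.prodMk measurable_fst).prodMk measurable_snd.snd)
  calc P.map (fun ω => ((Xtj ω, fun i : {i : Fin p // i ≠ j} => X ω i.1), y ω))
      = (P.map (fun ω => (Z ω, (Xtj ω, y ω)))).map φ := by
        rw [Measure.map_map hφ (hZ.prodMk (hXtj.prodMk hy))]
        rfl
    _ = (P.map (fun ω => (Z ω, (X ω j, y ω)))).map φ := by rw [hZeq]
    _ = P.map (fun ω => ((X ω j, fun i : {i : Fin p // i ≠ j} => X ω i.1), y ω)) := by
        rw [Measure.map_map hφ (hZ.prodMk (hXj.prodMk hy))]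
        rfl


end
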